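/- Let m > 1, q ∈ (0,1), ν > 1, K > 0, μ = m+q-2 > 0, and let Z : [0,∞) → (0, δ₀) be a C¹ solution of dZ/dη = -(μK/(m-1))Z² + μZh₀(Z) - (2μ/(m-1))Z^{ν+1}, where h₀ ∈ C¹(-δ₀, δ₀) satisfies h₀(0) = h₀'(0) = 0 and |h₀(ζ)| ≤ K|ζ|/(2(m-1)). Then Z is decreasing, Z(η) → 0 as η → ∞, Z⁻²·(dZ/dη)(η) → -μK/(m-1) as η → ∞, and Z^ν ∈ L¹(0,∞). -/

import Mathlib

open Real Filter Set Topology MeasureTheory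

theorem stmt15 (m q μ ν K δ₀ : ℝ) (h₀ Z : ℝ → ℝ)
    (hm : 1 < m) (hq0 : 0 < q) (hq1 : q < 1) (hν : 1 < ν) (hK : 0 < K)
    (hμ : μ = m + q - 2) (hμpos : 0 < μ) (hδ : 0 < δ₀)
    (hreg : ContDiffOn ℝ 1 h₀ (Set.Ioo (-δ₀) δ₀))
    (hh0 : h₀ 0 = 0) (hh0' : deriv h₀ 0 = 0)
    (hbound : ∀ ζ ∈ Set.Ioo (-δ₀) δ₀, |h₀ ζ| ≤ K * |ζ| / (2 * (m - 1)))
    (hZ : ∀ η ∈ Set.Ici (0 : ℝ), Z η ∈ Set.Ioo (0 : ℝ) δ₀)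
    (hode : ∀ η ∈ Set.Ici (0 : ℝ),
      HasDerivAt Z
        (-(μ * K / (m - 1)) * (Z η) ^ 2 + μ * Z η * h₀ (Z η)
          - (2 * μ / (m - 1)) * (Z η) ^ (ν + 1)) η) :
    StrictAntiOn Z (Set.Ici 0) ∧
      Filter.Tendsto Z Filter.atTop (nhds 0) ∧
      Filter.Tendsto (fun η => deriv Z η / (Z η) ^ 2) Filter.atTop
        (nhds (-(μ * K / (m - 1)))) ∧
      MeasureTheory.IntegrableOn (fun η => Z η ^ ν) (Set.Ici 0) := by
  have hm1 : (0:ℝ) < m - 1 := by linarith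
  set c : ℝ := μ * K / (m - 1) with hc
  have hcpos : 0 < c := div_pos (mul_pos hμpos hK) hm1
  set F : ℝ → ℝ := fun η => -c * Z η ^ 2 + μ * Z η * h₀ (Z η)
      - 2 * μ / (m - 1) * Z η ^ (ν + 1) with hF
  have hodeF : ∀ η, 0 ≤ η → HasDerivAt Z (F η) η := fun η hη => hode η hη
  have hZpos : ∀ η, 0 ≤ η → 0 < Z η := fun η hη => (hZ η hη).1
  have hZδ : ∀ η, 0 ≤ η → Z η < δ₀ := fun η hη => (hZ η hη).2
  have hFle : ∀ η, 0 ≤ η → F η ≤ -(c/2) * (Z η)^2 := by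
    intro η hη
    have hz := hZpos η hη
    have hmem : Z η ∈ Set.Ioo (-δ₀) δ₀ := ⟨by linarith, hZδ η hη⟩
    have hb := hbound _ hmem
    rw [abs_of_pos hz] at hb
    have h1 : μ * Z η * h₀ (Z η) ≤ c/2 * Z η ^ 2 := by
      calc μ * Z η * h₀ (Z η) ≤ μ * Z η * (K * Z η / (2*(m-1))) :=
            mul_le_mul_of_nonneg_left ((le_abs_self _).trans hb) (by positivity)
        _ = c/2 * Z η ^ 2 := by rw [hc]; field_simp
    have hD : 0 < 2 * μ / (m - 1) * Z η ^ (ν + 1) :=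
      mul_pos (by positivity) (Real.rpow_pos_of_pos hz _)
    simp only [hF]
    linarith
  have hFneg : ∀ η, 0 ≤ η → F η < 0 := by
    intro η hη
    have hz := hZpos η hη
    refine lt_of_le_of_lt (hFle η hη) ?_
    have : 0 < c/2 * Z η ^ 2 := by positivity
    linarith
  have hderivZ : ∀ η, 0 ≤ η → deriv Z η = F η := fun η hη => (hodeF η hη).deriv
  have hZcont : ContinuousOn Z (Set.Ici 0) :=
    fun η hη => ((hodeF η hη).continuousAt).continuousWithinAt
  have part1 : StrictAntiOn Z (Set.Ici 0) := by
    apply strictAntiOn_of_deriv_neg (convex_Ici 0) hZcont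
    intro x hx
    rw [interior_Ici] at hx
    rw [hderivZ x hx.le]
    exact hFneg x hx.le
  -- MVT helper
  have hMVT : ∀ a b : ℝ, 0 ≤ a → a < b →
      ∃ ξ ∈ Set.Ioo a b, F ξ = (Z b - Z a)/(b - a) := by
    intro a b ha hab
    exact exists_hasDerivAt_eq_slope Z F hab
      (hZcont.mono (fun x hx => ha.trans hx.1))
      (fun x hx => hodeF x (ha.trans hx.1.le))
  -- limit of Z
  set g : ℝ → ℝ := fun η => Z (max η 0) with hg
  have hganti : Antitone g := by
    intro a b hab
    rcases eq_or_lt_of_le (max_le_max hab (le_refl (0:ℝ))) with h | h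
    · simp only [hg]; rw [h]
    · exact (part1 (mem_Ici.mpr (le_max_right a 0)) (mem_Ici.mpr (le_max_right b 0)) h).le
  have hgpos : ∀ η, 0 < g η := fun η => hZpos _ (le_max_right η 0)
  have hbdd : BddBelow (Set.range g) := ⟨0, by rintro _ ⟨η, rfl⟩; exact (hgpos η).le⟩
  have hgt := tendsto_atTop_ciInf hganti hbdd
  set L := ⨅ i, g i with hL
  have hL0 : 0 ≤ L := le_ciInf fun i => (hgpos i).le
  have hLle : ∀ η, 0 ≤ η → L ≤ Z η := by
    intro η hη
    have h2 : g η = Z η := congrArg Z (max_eq_left hη)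
    exact h2 ▸ ciInf_le hbdd η
  have hLeq : L = 0 := by
    by_contra h
    have hLpos : 0 < L := lt_of_le_of_ne hL0 (Ne.symm h)
    set A : ℝ := c/2 * L^2 with hA
    have hApos : 0 < A := by positivity
    set T : ℝ := Z 0 / A + 1 with hT
    have hZ0 := hZpos 0 le_rfl
    have hTpos : 0 < T := by positivity
    obtain ⟨ξ, hξ, hslope⟩ := hMVT 0 T le_rfl hTpos
    have h1 : F ξ ≤ -A := by
      have hz := hZpos ξ hξ.1.le
      have hLZ : L ≤ Z ξ := hLle ξ hξ.1.le
      calc F ξ ≤ -(c/2) * (Z ξ)^2 := hFle ξ hξ.1.le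
        _ ≤ -A := by
            have hsq : L^2 ≤ Z ξ ^ 2 := by nlinarith
            have h5 := mul_le_mul_of_nonneg_left hsq (by positivity : (0:ℝ) ≤ c/2)
            rw [hA]; linarith
    rw [sub_zero] at hslope
    have h2 : Z T - Z 0 = F ξ * T := by
      have := (div_eq_iff hTpos.ne').mp hslope.symm
      linarith
    have h3 : F ξ * T ≤ -A * T := mul_le_mul_of_nonneg_right h1 hTpos.le
    have h4 : A * T = Z 0 + A := by
      rw [hT]; field_simp
    have hZT := hZpos T hTpos.le
    nlinarith
  have hgZ : g =ᶠ[atTop] Z := by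
    filter_upwards [eventually_ge_atTop (0:ℝ)] with η hη
    simp only [hg]; rw [max_eq_left hη]
  have part2 : Tendsto Z atTop (nhds 0) := by
    rw [hLeq] at hgt
    exact hgt.congr' hgZ
  -- part 3
  have hratio : ∀ η, 0 ≤ η →
      F η / (Z η)^2 = -c + μ * (h₀ (Z η) / Z η) - 2*μ/(m-1) * Z η ^ (ν - 1) := by
    intro η hη
    have hz := hZpos η hη
    have hpow : Z η ^ (ν+1) = Z η ^ (ν-1) * Z η ^ 2 := by
      rw [← Real.rpow_natCast (Z η) 2, ← Real.rpow_add hz]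
      norm_num
      congr 1
      ring
    simp only [hF]
    rw [hpow]
    field_simp
  have hh : HasDerivAt h₀ 0 0 := by
    have hmem : Set.Ioo (-δ₀) δ₀ ∈ nhds (0:ℝ) := isOpen_Ioo.mem_nhds ⟨by linarith, hδ⟩
    have hdiff : DifferentiableAt ℝ h₀ 0 :=
      ((hreg.differentiableOn one_ne_zero) 0 ⟨by linarith, hδ⟩).differentiableAt hmem
    have := hdiff.hasDerivAt
    rwa [hh0'] at this
  have hslope0 : Tendsto (slope h₀ 0) (𝓝[≠] 0) (nhds 0) :=
    hasDerivAt_iff_tendsto_slope.mp hh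
  have hZt : Tendsto Z atTop (𝓝[≠] (0:ℝ)) := by
    rw [tendsto_nhdsWithin_iff]
    refine ⟨part2, ?_⟩
    filter_upwards [eventually_ge_atTop (0:ℝ)] with η hη
    exact (hZpos η hη).ne'
  have ht1 : Tendsto (fun η => h₀ (Z η) / Z η) atTop (nhds 0) := by
    have := hslope0.comp hZt
    refine this.congr fun η => ?_
    simp [Function.comp, slope_def_field, hh0]
  have ht2 : Tendsto (fun η => Z η ^ (ν-1)) atTop (nhds 0) := by
    have hc0 : ContinuousAt (fun x : ℝ => x ^ (ν-1)) 0 :=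
      Real.continuousAt_rpow_const 0 (ν-1) (Or.inr (by linarith))
    have := hc0.tendsto.comp part2
    simpa [Function.comp_def, Real.zero_rpow (sub_ne_zero.mpr (by linarith : ν ≠ 1))] using this
  have part3 : Tendsto (fun η => deriv Z η / (Z η)^2) atTop (nhds (-c)) := by
    have hlim : Tendsto (fun η => -c + μ * (h₀ (Z η)/Z η) - 2*μ/(m-1) * Z η ^ (ν-1))
        atTop (nhds (-c + μ * 0 - 2*μ/(m-1) * 0)) :=
      (tendsto_const_nhds.add (ht1.const_mul μ)).sub (ht2.const_mul _)
    simp only [mul_zero, add_zero, sub_zero] at hlim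
    refine Tendsto.congr' ?_ hlim
    filter_upwards [eventually_ge_atTop (0:ℝ)] with η hη
    rw [hderivZ η hη, hratio η hη]
  -- part 4
  have hWderiv : ∀ η, 0 ≤ η → HasDerivAt (fun x => (Z x)⁻¹) (-(F η) / (Z η)^2) η :=
    fun η hη => (hodeF η hη).inv (hZpos η hη).ne'
  have hWcont : ContinuousOn (fun x => (Z x)⁻¹) (Set.Ici 0) :=
    hZcont.inv₀ (fun x hx => (hZpos x hx).ne')
  have hWbound : ∀ η, 0 ≤ η → c/2 ≤ -(F η) / (Z η)^2 := by
    intro η hη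
    have hz := hZpos η hη
    rw [le_div_iff₀ (by positivity)]
    linarith [hFle η hη]
  have hWgrow : ∀ b, 0 < b → c/2 * b ≤ (Z b)⁻¹ := by
    intro b hb
    obtain ⟨ξ, hξ, hsl⟩ := exists_hasDerivAt_eq_slope (fun x => (Z x)⁻¹)
      (fun x => -(F x)/(Z x)^2) hb
      (hWcont.mono (fun x hx => hx.1)) (fun x hx => hWderiv x hx.1.le)
    have h1 := hWbound ξ hξ.1.le
    rw [hsl, sub_zero, le_div_iff₀ hb] at h1
    have h0 : 0 < (Z 0)⁻¹ := inv_pos.mpr (hZpos 0 le_rfl)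
    linarith
  have hZsmall : ∀ b, 0 < b → Z b ≤ (c/2 * b)⁻¹ := by
    intro b hb
    have h := hWgrow b hb
    have hz := hZpos b hb.le
    rw [← inv_inv (Z b)]
    exact inv_anti₀ (by positivity) h
  have hcontZν : ContinuousOn (fun η => Z η ^ ν) (Set.Ici 0) :=
    hZcont.rpow_const (fun x hx => Or.inl (hZpos x hx).ne')
  have hIcc : IntegrableOn (fun η => Z η ^ ν) (Set.Icc 0 1) :=
    (hcontZν.mono (fun x hx => hx.1)).integrableOn_compact isCompact_Icc
  have hIoi : IntegrableOn (fun η => Z η ^ ν) (Set.Ioi 1) := by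
    have hint : IntegrableOn (fun η : ℝ => (2/c)^ν * η ^ (-ν)) (Set.Ioi 1) :=
      (integrableOn_Ioi_rpow_of_lt (by linarith) one_pos).const_mul _
    refine MeasureTheory.Integrable.mono' hint
      ((hcontZν.mono (fun x (hx : x ∈ Set.Ioi (1:ℝ)) => (show (0:ℝ) ≤ x from le_trans zero_le_one (le_of_lt hx)))).aestronglyMeasurable
        measurableSet_Ioi) ?_
    rw [ae_restrict_iff' measurableSet_Ioi]
    filter_upwards with η hη
    have hb : (0:ℝ) < η := lt_trans one_pos hη
    have hz := hZpos η hb.le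
    have h1 : Z η ≤ 2/c * η⁻¹ := by
      have h := hZsmall η hb
      calc Z η ≤ (c/2*η)⁻¹ := h
        _ = 2/c * η⁻¹ := by field_simp
    rw [Real.norm_eq_abs, abs_of_pos (Real.rpow_pos_of_pos hz ν)]
    calc Z η ^ ν ≤ (2/c * η⁻¹) ^ ν := Real.rpow_le_rpow hz.le h1 (by linarith)
      _ = (2/c)^ν * η ^ (-ν) := by
          rw [Real.mul_rpow (by positivity) (by positivity),
            Real.inv_rpow hb.le, ← Real.rpow_neg hb.le]
  refine ⟨part1, part2, part3, ?_⟩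
  rw [← Set.Icc_union_Ioi_eq_Ici (zero_le_one)]
  exact hIcc.union hIoi
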